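/- Suppose X ⊆ D with clique reduct X_c such that for every maximal clique K of the ambient structure B_c, a designated (s-1)-element subset E_K ⊆ K satisfies: E_K ⊆ X^r if and only if |K ∩ X^r| ≥ s (X is 'good'). Define R-relations R₀ ∪ R₁ pairing f(K) = tuple enumerating E_K with each element of K \ E_K (or K \ A^r). Then the relative clique predimension equals the relative relational predimension: λ(X_c / X_c ∩ A_c) = δ(X / X ∩ A). -/
import Mathlib


/-- In the construction of the final lemma: `B_c ∈ C_clq` extends `A_c`; for each maximal
clique `K` an `(s-1)`-element subset `E_K ⊆ K` is chosen (inside `A^r` whenever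
`K ∩ A^r` is a clique of `A_c`), enumerated by the tuple `f(K)`; the relations are
`R^A ∪ R₀ ∪ R₁`. For any `X ⊆ B` that is good (for every maximal clique `K`,
`E_K ⊆ X^r ↔ |K ∩ X^r| ≥ s`), the relative clique predimension equals the relative
relational predimension: `λ(X_c / X_c ∩ A_c) = δ(X / X ∩ A)`. -/
theorem stmt_16 {α : Type*} [DecidableEq α] (r s : ℕ) (hr : 1 ≤ r) (hs : 2 ≤ s)
    (A B : Finset α) (hAB : A ⊆ B)
    (MB : Finset (Finset (Fin r → α)))
    (hsub : ∀ K ∈ MB, ∀ p ∈ K, ∀ i, p i ∈ B)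
    (hsize : ∀ K ∈ MB, s ≤ K.card)
    (hint : ∀ K₁ ∈ MB, ∀ K₂ ∈ MB, K₁ ≠ K₂ → (K₁ ∩ K₂).card < s)
    (E : Finset (Fin r → α) → Finset (Fin r → α))
    (hE : ∀ K ∈ MB, E K ⊆ K ∧ (E K).card = s - 1 ∧
      (s ≤ (K.filter fun p => ∀ i, p i ∈ A).card → ∀ p ∈ E K, ∀ i, p i ∈ A))
    (f : Finset (Fin r → α) → (Fin (s - 1) → (Fin r → α)))
    (hf : ∀ K ∈ MB, Finset.image (f K) Finset.univ = E K)
    (RA : Finset ((Fin (s - 1) → (Fin r → α)) × (Fin r → α)))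
    (hRAmem : ∀ q ∈ RA, (∀ j i, q.1 j i ∈ A) ∧ (∀ i, q.2 i ∈ A))
    (R0 R1 : Finset ((Fin (s - 1) → (Fin r → α)) × (Fin r → α)))
    (hR0 : R0 = MB.biUnion fun K =>
      if s ≤ (K.filter fun p => ∀ i, p i ∈ A).card then
        (K.filter fun p => ¬ ∀ i, p i ∈ A).image fun b => (f K, b)
      else ∅)
    (hR1 : R1 = MB.biUnion fun K =>
      if s ≤ (K.filter fun p => ∀ i, p i ∈ A).card then ∅
      else (K \ E K).image fun b => (f K, b))
    (X : Finset α) (hXB : X ⊆ B)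
    (hgood : ∀ K ∈ MB,
      ((∀ p ∈ E K, ∀ i, p i ∈ X) ↔ s ≤ (K.filter fun p => ∀ i, p i ∈ X).card)) :
    -- λ(X / X ∩ A) = δ(X / X ∩ A)
    (((X.card : ℤ) -
        ∑ K ∈ MB, max 0 (((K.filter fun p => ∀ i, p i ∈ X).card : ℤ) - ((s : ℤ) - 1))) -
      (((X ∩ A).card : ℤ) -
        ∑ K ∈ MB, max 0 (((K.filter fun p => ∀ i, p i ∈ X ∩ A).card : ℤ) - ((s : ℤ) - 1))))
    =
    (((X.card : ℤ) -
        (((RA ∪ R0 ∪ R1).filter fun q =>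
          (∀ j i, q.1 j i ∈ X) ∧ (∀ i, q.2 i ∈ X)).card : ℤ)) -
      (((X ∩ A).card : ℤ) -
        (((RA ∪ R0 ∪ R1).filter fun q =>
          (∀ j i, q.1 j i ∈ X ∩ A) ∧ (∀ i, q.2 i ∈ X ∩ A)).card : ℤ))) := by
  -- the combined per-clique relation set
  obtain ⟨g, hg⟩ : ∃ g : Finset (Fin r → α) → Finset ((Fin (s - 1) → (Fin r → α)) × (Fin r → α)),
      g = fun K =>
        if s ≤ (K.filter fun p => ∀ i, p i ∈ A).card then
          (K.filter fun p => ¬ ∀ i, p i ∈ A).image fun b => (f K, b)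
        else (K \ E K).image fun b => (f K, b) := ⟨_, rfl⟩
  have hgmem : ∀ K ∈ MB, ∀ q ∈ g K, ∃ b, q = (f K, b) ∧ b ∈ K ∧ b ∉ E K := by
    intro K hK q hq
    simp only [hg] at hq
    split_ifs at hq with h1
    · obtain ⟨b, hb, rfl⟩ := Finset.mem_image.mp hq
      rw [Finset.mem_filter] at hb
      refine ⟨b, rfl, hb.1, fun hbE => hb.2 ((hE K hK).2.2 h1 b hbE)⟩
    · obtain ⟨b, hb, rfl⟩ := Finset.mem_image.mp hq
      rw [Finset.mem_sdiff] at hb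
      exact ⟨b, rfl, hb.1, hb.2⟩
  have hgdisj : ∀ K₁ ∈ MB, ∀ K₂ ∈ MB, K₁ ≠ K₂ → Disjoint (g K₁) (g K₂) := by
    intro K₁ h₁ K₂ h₂ hne
    rw [Finset.disjoint_left]
    intro q hq1 hq2
    obtain ⟨b, rfl, hbK, hbE⟩ := hgmem K₁ h₁ q hq1
    obtain ⟨b', heq, hbK', hbE'⟩ := hgmem K₂ h₂ _ hq2
    have hfb : f K₁ = f K₂ := congrArg Prod.fst heq
    have hbb : b = b' := congrArg Prod.snd heq
    have hEE : E K₁ = E K₂ := by rw [← hf K₁ h₁, ← hf K₂ h₂, hfb]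
    have hsubI : insert b (E K₁) ⊆ K₁ ∩ K₂ := by
      intro p hp
      rcases Finset.mem_insert.mp hp with rfl | hp
      · exact Finset.mem_inter.mpr ⟨hbK, hbb ▸ hbK'⟩
      · exact Finset.mem_inter.mpr ⟨(hE K₁ h₁).1 hp, (hE K₂ h₂).1 (hEE ▸ hp)⟩
    have hcard : s ≤ (K₁ ∩ K₂).card := by
      have hc := Finset.card_le_card hsubI
      rw [Finset.card_insert_of_notMem hbE, (hE K₁ h₁).2.1] at hc
      omega
    exact absurd (hint K₁ h₁ K₂ h₂ hne) (not_lt.mpr hcard)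
  have hR01 : R0 ∪ R1 = MB.biUnion g := by
    ext q
    simp only [hR0, hR1, hg, Finset.mem_union, Finset.mem_biUnion]
    constructor
    · rintro (⟨K, hK, hq⟩ | ⟨K, hK, hq⟩) <;> refine ⟨K, hK, ?_⟩ <;>
        split_ifs at hq ⊢ <;>
        first
          | exact hq
          | exact absurd hq (Finset.notMem_empty q)
          | exact absurd hq (by assumption)
    · rintro ⟨K, hK, hq⟩
      by_cases h : s ≤ (K.filter fun p => ∀ i, p i ∈ A).card
      · rw [if_pos h] at hq
        exact Or.inl ⟨K, hK, by rw [if_pos h]; exact hq⟩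
      · rw [if_neg h] at hq
        exact Or.inr ⟨K, hK, by rw [if_neg h]; exact hq⟩
  -- key per-clique computation
  have key : ∀ K ∈ MB,
      ((((g K).filter fun q =>
            (∀ j i, q.1 j i ∈ X) ∧ (∀ i, q.2 i ∈ X)).card : ℤ) -
        (((g K).filter fun q =>
            (∀ j i, q.1 j i ∈ X ∩ A) ∧ (∀ i, q.2 i ∈ X ∩ A)).card : ℤ))
      = max 0 (((K.filter fun p => ∀ i, p i ∈ X).card : ℤ) - ((s : ℤ) - 1)) -
        max 0 (((K.filter fun p => ∀ i, p i ∈ X ∩ A).card : ℤ) - ((s : ℤ) - 1)) := by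
    intro K hK
    obtain ⟨hEK, hEcard, hEAimp⟩ := hE K hK
    have hinj : Function.Injective (fun b : Fin r → α => (f K, b)) :=
      fun b₁ b₂ h => congrArg Prod.snd h
    have hfKmem : ∀ j, f K j ∈ E K := by
      intro j
      rw [← hf K hK]
      exact Finset.mem_image_of_mem _ (Finset.mem_univ j)
    have hEiff : ∀ S : Finset α,
        (∀ j i, f K j i ∈ S) ↔ ∀ p ∈ E K, ∀ i, p i ∈ S := by
      intro S
      constructor
      · intro h p hp i
        obtain ⟨j, -, rfl⟩ := Finset.mem_image.mp ((hf K hK) ▸ hp)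
        exact h j i
      · intro h j i
        exact h _ (hfKmem j) i
    have hsubXA_X : (K.filter fun p => ∀ i, p i ∈ X ∩ A) ⊆
        (K.filter fun p => ∀ i, p i ∈ X) := by
      intro p hp
      rw [Finset.mem_filter] at *
      exact ⟨hp.1, fun i => (Finset.mem_inter.mp (hp.2 i)).1⟩
    have hsubXA_A : (K.filter fun p => ∀ i, p i ∈ X ∩ A) ⊆
        (K.filter fun p => ∀ i, p i ∈ A) := by
      intro p hp
      rw [Finset.mem_filter] at *
      exact ⟨hp.1, fun i => (Finset.mem_inter.mp (hp.2 i)).2⟩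
    have hcXA_le_X := Finset.card_le_card hsubXA_X
    have hcXA_le_A := Finset.card_le_card hsubXA_A
    by_cases h1 : s ≤ (K.filter fun p => ∀ i, p i ∈ A).card
    · -- case 1 : K ∩ A^r is a maximal clique of A_c
      have hgK : g K = (K.filter fun p => ¬ ∀ i, p i ∈ A).image fun b => (f K, b) := by
        rw [hg]; exact if_pos h1
      have hcA : ((g K).filter fun q =>
          (∀ j i, q.1 j i ∈ X ∩ A) ∧ (∀ i, q.2 i ∈ X ∩ A)).card = 0 := by
        rw [hgK]
        simp only [Finset.filter_image, Finset.card_image_of_injective _ hinj,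
          Finset.card_eq_zero]
        refine Finset.filter_eq_empty_iff.mpr ?_
        intro b hb hcon
        rw [Finset.mem_filter] at hb
        exact hb.2 (fun i => (Finset.mem_inter.mp (hcon.2 i)).2)
      by_cases h2 : s ≤ (K.filter fun p => ∀ i, p i ∈ X).card
      · have hEXX : ∀ p ∈ E K, ∀ i, p i ∈ X := (hgood K hK).mpr h2
        have hEsubXA : E K ⊆ (K.filter fun p => ∀ i, p i ∈ X ∩ A) := by
          intro p hp
          rw [Finset.mem_filter]
          exact ⟨hEK hp, fun i => Finset.mem_inter.mpr ⟨hEXX p hp i, hEAimp h1 p hp i⟩⟩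
        have hXA_ge : s - 1 ≤ (K.filter fun p => ∀ i, p i ∈ X ∩ A).card := by
          have h := Finset.card_le_card hEsubXA
          rwa [hEcard] at h
        have hcX : ((g K).filter fun q =>
            (∀ j i, q.1 j i ∈ X) ∧ (∀ i, q.2 i ∈ X)).card
            = (K.filter fun p => ∀ i, p i ∈ X).card -
              (K.filter fun p => ∀ i, p i ∈ X ∩ A).card := by
          rw [hgK]
          simp only [Finset.filter_image, Finset.card_image_of_injective _ hinj]
          have heq : ((K.filter fun p => ¬ ∀ i, p i ∈ A).filter fun b =>
              (∀ j i, f K j i ∈ X) ∧ (∀ i, b i ∈ X))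
              = (K.filter fun p => ∀ i, p i ∈ X) \
                (K.filter fun p => ∀ i, p i ∈ X ∩ A) := by
            ext p
            simp only [Finset.mem_filter, Finset.mem_sdiff, Finset.mem_inter]
            constructor
            · rintro ⟨⟨hpK, hpA⟩, -, hpX⟩
              exact ⟨⟨hpK, hpX⟩, fun hcon => hpA (fun i => (hcon.2 i).2)⟩
            · rintro ⟨⟨hpK, hpX⟩, hnot⟩
              refine ⟨⟨hpK, fun hpA => hnot ⟨hpK, fun i => ⟨hpX i, hpA i⟩⟩⟩,
                fun j i => hEXX _ (hfKmem j) i, hpX⟩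
          rw [heq, Finset.card_sdiff_of_subset hsubXA_X]
        rw [hcX, hcA,
          max_eq_right (by
            have h := h2; zify at h; linarith : (0:ℤ) ≤
            ((K.filter fun p => ∀ i, p i ∈ X).card : ℤ) - ((s : ℤ) - 1)),
          max_eq_right (by
            have h := hXA_ge
            zify [show 1 ≤ s from by linarith] at h
            linarith : (0:ℤ) ≤
            ((K.filter fun p => ∀ i, p i ∈ X ∩ A).card : ℤ) - ((s : ℤ) - 1))]
        rw [Nat.cast_sub hcXA_le_X]
        push_cast
        ring
      · have hnEX : ¬ ∀ p ∈ E K, ∀ i, p i ∈ X := fun h => h2 ((hgood K hK).mp h)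
        have hcX : ((g K).filter fun q =>
            (∀ j i, q.1 j i ∈ X) ∧ (∀ i, q.2 i ∈ X)).card = 0 := by
          rw [hgK]
          simp only [Finset.filter_image, Finset.card_image_of_injective _ hinj,
            Finset.card_eq_zero]
          refine Finset.filter_eq_empty_iff.mpr ?_
          intro b _ hcon
          exact hnEX ((hEiff X).mp hcon.1)
        have h2' : ((K.filter fun p => ∀ i, p i ∈ X).card : ℤ) < s := by
          have h := not_le.mp h2; zify at h; linarith
        have hXA' : ((K.filter fun p => ∀ i, p i ∈ X ∩ A).card : ℤ) ≤
            ((K.filter fun p => ∀ i, p i ∈ X).card : ℤ) := by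
          have h := hcXA_le_X; zify at h; linarith
        rw [hcX, hcA,
          max_eq_left (by linarith : ((K.filter fun p => ∀ i, p i ∈ X).card : ℤ) -
            ((s : ℤ) - 1) ≤ 0),
          max_eq_left (by linarith : ((K.filter fun p => ∀ i, p i ∈ X ∩ A).card : ℤ) -
            ((s : ℤ) - 1) ≤ 0)]
        simp
    · -- case 2 : K ∩ A^r is not a maximal clique of A_c
      have hgK : g K = (K \ E K).image fun b => (f K, b) := by
        rw [hg]; exact if_neg h1
      have hXAsmall : (K.filter fun p => ∀ i, p i ∈ X ∩ A).card ≤ s - 1 :=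
        le_trans hcXA_le_A (Nat.le_pred_of_lt (not_le.mp h1))
      have hmaxA : max 0 (((K.filter fun p => ∀ i, p i ∈ X ∩ A).card : ℤ) -
          ((s : ℤ) - 1)) = 0 :=
        max_eq_left (by
          have h := hXAsmall
          zify [show 1 ≤ s from by linarith] at h
          linarith)
      have hcA : ((g K).filter fun q =>
          (∀ j i, q.1 j i ∈ X ∩ A) ∧ (∀ i, q.2 i ∈ X ∩ A)).card = 0 := by
        rw [hgK]
        simp only [Finset.filter_image, Finset.card_image_of_injective _ hinj,
          Finset.card_eq_zero]
        by_cases hEXA : ∀ p ∈ E K, ∀ i, p i ∈ X ∩ A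
        · have hEsubXA : E K ⊆ (K.filter fun p => ∀ i, p i ∈ X ∩ A) := by
            intro p hp
            rw [Finset.mem_filter]
            exact ⟨hEK hp, hEXA p hp⟩
          have hXA_ge : s - 1 ≤ (K.filter fun p => ∀ i, p i ∈ X ∩ A).card := by
            have h := Finset.card_le_card hEsubXA
            rwa [hEcard] at h
          have heq : ((K \ E K).filter fun b =>
              (∀ j i, f K j i ∈ X ∩ A) ∧ (∀ i, b i ∈ X ∩ A))
              = (K.filter fun p => ∀ i, p i ∈ X ∩ A) \ E K := by
            ext p
            simp only [Finset.mem_filter, Finset.mem_sdiff]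
            constructor
            · rintro ⟨⟨hpK, hpE⟩, -, hpXA⟩
              exact ⟨⟨hpK, hpXA⟩, hpE⟩
            · rintro ⟨⟨hpK, hpXA⟩, hpE⟩
              exact ⟨⟨hpK, hpE⟩, fun j i => hEXA _ (hfKmem j) i, hpXA⟩
          rw [heq, ← Finset.card_eq_zero, Finset.card_sdiff_of_subset hEsubXA, hEcard]
          exact Nat.sub_eq_zero_of_le hXAsmall
        · refine Finset.filter_eq_empty_iff.mpr ?_
          intro b _ hcon
          exact hEXA ((hEiff (X ∩ A)).mp hcon.1)
      by_cases h2 : s ≤ (K.filter fun p => ∀ i, p i ∈ X).card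
      · have hEXX : ∀ p ∈ E K, ∀ i, p i ∈ X := (hgood K hK).mpr h2
        have hEsubX : E K ⊆ (K.filter fun p => ∀ i, p i ∈ X) := by
          intro p hp
          rw [Finset.mem_filter]
          exact ⟨hEK hp, hEXX p hp⟩
        have hcX : ((g K).filter fun q =>
            (∀ j i, q.1 j i ∈ X) ∧ (∀ i, q.2 i ∈ X)).card
            = (K.filter fun p => ∀ i, p i ∈ X).card - (s - 1) := by
          rw [hgK]
          simp only [Finset.filter_image, Finset.card_image_of_injective _ hinj]
          have heq : ((K \ E K).filter fun b =>
              (∀ j i, f K j i ∈ X) ∧ (∀ i, b i ∈ X))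
              = (K.filter fun p => ∀ i, p i ∈ X) \ E K := by
            ext p
            simp only [Finset.mem_filter, Finset.mem_sdiff]
            constructor
            · rintro ⟨⟨hpK, hpE⟩, -, hpX⟩
              exact ⟨⟨hpK, hpX⟩, hpE⟩
            · rintro ⟨⟨hpK, hpX⟩, hpE⟩
              exact ⟨⟨hpK, hpE⟩, fun j i => hEXX _ (hfKmem j) i, hpX⟩
          rw [heq, Finset.card_sdiff_of_subset hEsubX, hEcard]
        rw [hcX, hcA, hmaxA,
          max_eq_right (by
            have h := h2; zify at h; linarith : (0:ℤ) ≤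
            ((K.filter fun p => ∀ i, p i ∈ X).card : ℤ) - ((s : ℤ) - 1))]
        rw [Nat.cast_sub (le_trans (Nat.sub_le s 1) h2),
          Nat.cast_sub (show 1 ≤ s from by linarith)]
        push_cast
        ring
      · have hnEX : ¬ ∀ p ∈ E K, ∀ i, p i ∈ X := fun h => h2 ((hgood K hK).mp h)
        have hcX : ((g K).filter fun q =>
            (∀ j i, q.1 j i ∈ X) ∧ (∀ i, q.2 i ∈ X)).card = 0 := by
          rw [hgK]
          simp only [Finset.filter_image, Finset.card_image_of_injective _ hinj,
            Finset.card_eq_zero]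
          refine Finset.filter_eq_empty_iff.mpr ?_
          intro b _ hcon
          exact hnEX ((hEiff X).mp hcon.1)
        have h2' : ((K.filter fun p => ∀ i, p i ∈ X).card : ℤ) < s := by
          have h := not_le.mp h2; zify at h; linarith
        rw [hcX, hcA, hmaxA,
          max_eq_left (by linarith : ((K.filter fun p => ∀ i, p i ∈ X).card : ℤ) -
            ((s : ℤ) - 1) ≤ 0)]
        simp
  -- counting the relations over the biUnion
  have hbiX : (((MB.biUnion g).filter fun q =>
      (∀ j i, q.1 j i ∈ X) ∧ (∀ i, q.2 i ∈ X)).card : ℤ)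
      = ∑ K ∈ MB, ((((g K).filter fun q =>
          (∀ j i, q.1 j i ∈ X) ∧ (∀ i, q.2 i ∈ X)).card : ℤ)) := by
    rw [Finset.filter_biUnion, Finset.card_biUnion
      (fun K hK K' hK' hne => Finset.disjoint_filter_filter (hgdisj K hK K' hK' hne))]
    push_cast
    rfl
  have hbiA : (((MB.biUnion g).filter fun q =>
      (∀ j i, q.1 j i ∈ X ∩ A) ∧ (∀ i, q.2 i ∈ X ∩ A)).card : ℤ)
      = ∑ K ∈ MB, ((((g K).filter fun q =>
          (∀ j i, q.1 j i ∈ X ∩ A) ∧ (∀ i, q.2 i ∈ X ∩ A)).card : ℤ)) := by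
    rw [Finset.filter_biUnion, Finset.card_biUnion
      (fun K hK K' hK' hne => Finset.disjoint_filter_filter (hgdisj K hK K' hK' hne))]
    push_cast
    rfl
  -- relations inside RA are unaffected by intersecting with A
  have hRAsame : ∀ (T : Finset ((Fin (s - 1) → (Fin r → α)) × (Fin r → α))),
      (∀ q ∈ T, (∀ j i, q.1 j i ∈ A) ∧ (∀ i, q.2 i ∈ A)) →
      (T.filter fun q => (∀ j i, q.1 j i ∈ X) ∧ (∀ i, q.2 i ∈ X))
      = T.filter fun q => (∀ j i, q.1 j i ∈ X ∩ A) ∧ (∀ i, q.2 i ∈ X ∩ A) := by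
    intro T hT
    refine Finset.filter_congr ?_
    intro q hq
    obtain ⟨hq1, hq2⟩ := hT q hq
    constructor
    · rintro ⟨a, b⟩
      exact ⟨fun j i => Finset.mem_inter.mpr ⟨a j i, hq1 j i⟩,
        fun i => Finset.mem_inter.mpr ⟨b i, hq2 i⟩⟩
    · rintro ⟨a, b⟩
      exact ⟨fun j i => (Finset.mem_inter.mp (a j i)).1,
        fun i => (Finset.mem_inter.mp (b i)).1⟩
  -- decompose the full relation set
  have hUX : ∀ (P : ((Fin (s - 1) → (Fin r → α)) × (Fin r → α)) → Prop)
      [DecidablePred P],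
      (((RA ∪ R0 ∪ R1).filter P).card : ℤ)
      = ((RA.filter P).card : ℤ) + (((R0 ∪ R1).filter P).card : ℤ)
        - (((RA ∩ (R0 ∪ R1)).filter P).card : ℤ) := by
    intro P _
    rw [Finset.union_assoc, Finset.filter_union]
    have h := Finset.card_union_add_card_inter (RA.filter P) ((R0 ∪ R1).filter P)
    rw [← Finset.filter_inter_distrib] at h
    have h' := congrArg (Nat.cast (R := ℤ)) h
    push_cast at h'
    linarith
  have hsum : (∑ K ∈ MB, ((((g K).filter fun q =>
        (∀ j i, q.1 j i ∈ X) ∧ (∀ i, q.2 i ∈ X)).card : ℤ))) -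
      (∑ K ∈ MB, ((((g K).filter fun q =>
        (∀ j i, q.1 j i ∈ X ∩ A) ∧ (∀ i, q.2 i ∈ X ∩ A)).card : ℤ)))
      = (∑ K ∈ MB, max 0 (((K.filter fun p => ∀ i, p i ∈ X).card : ℤ) - ((s : ℤ) - 1))) -
        (∑ K ∈ MB, max 0 (((K.filter fun p => ∀ i, p i ∈ X ∩ A).card : ℤ) - ((s : ℤ) - 1))) := by
    rw [← Finset.sum_sub_distrib, ← Finset.sum_sub_distrib]
    exact Finset.sum_congr rfl key
  rw [hUX, hUX, hR01, hbiX, hbiA,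
    hRAsame RA hRAmem,
    hRAsame (RA ∩ (MB.biUnion g)) (fun q hq => hRAmem q (Finset.mem_inter.mp hq).1)]
  linarith [hsum]
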